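/- arXiv:2201.08750 — 2 statements merged into one kernel-verified Lean document; each statement's English description precedes it below -/
import Mathlib

section
/- Invariance under causal equivalence: if T and S are generalized causal teams with T ≈ S, then for any formula φ of CO, CO_⤘ (CO with global disjunction), or COD (CO with dependence atoms), T ⊨ φ if and only if S ⊨ φ. -/
namespace CausalTeams

attribute [local instance] Classical.propDecidable

/-- A system of functions over a signature: each endogenous variable `V ∈ En` has a set
of parents `PA V` (not containing `V`) and a function computing its value, which depends
only on the values of its parents. -/
structure FuncSystem (Var : Type) (Val : Var → Type) : Type where
  En : Set Var
  PA : Var → Set Var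
  pa_ne : ∀ V, V ∉ PA V
  fn : ∀ V, (∀ W, Val W) → Val V
  dep_only : ∀ V (s t : ∀ W, Val W), (∀ W ∈ PA V, s W = t W) → fn V s = fn V t

variable {Var : Type} {Val : Var → Type}

/-- Assignments of values to the variables. -/
abbrev Assign (Var : Type) (Val : Var → Type) : Type := ∀ V, Val V

/-- An assignment is compatible with a system of functions if each endogenous variable's
value is the one generated by its function. -/
def Compat (s : Assign Var Val) (F : FuncSystem Var Val) : Prop :=
  ∀ V ∈ F.En, s V = F.fn V s

/-- The endogenous variables whose generating function is constant. -/
def Cn (F : FuncSystem Var Val) : Set Var :=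
  {V | V ∈ F.En ∧ ∀ s t : Assign Var Val, F.fn V s = F.fn V t}

/-- The functions for `V` in `F` and `G` are equivalent up to dummy arguments: they agree
whenever their arguments agree on the common parents of `V`. -/
def fnEquiv (F G : FuncSystem Var Val) (V : Var) : Prop :=
  ∀ s t : Assign Var Val,
    (∀ W, W ∈ F.PA V → W ∈ G.PA V → s W = t W) → F.fn V s = G.fn V t

/-- Equivalence of systems of functions up to dummy arguments. -/
def sysEquiv (F G : FuncSystem Var Val) : Prop :=
  F.En \ Cn F = G.En \ Cn G ∧ ∀ V ∈ F.En \ Cn F, fnEquiv F G V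

/-- The edge relation of the causal graph of `F`. -/
def Edge (F : FuncSystem Var Val) (W V : Var) : Prop := V ∈ F.En ∧ W ∈ F.PA V

/-- `F` is recursive: its causal graph is acyclic. -/
def RecursiveSys (F : FuncSystem Var Val) : Prop :=
  ∀ V, ¬ Relation.TransGen (Edge F) V V

/-- The system of functions resulting from the intervention `do(X = x)`: the variables of
`X` are made exogenous; parents and functions of the remaining endogenous variables are kept. -/
def restrictSys (F : FuncSystem Var Val) (X : Finset Var) : FuncSystem Var Val where
  En := F.En \ ↑X
  PA := F.PA
  pa_ne := F.pa_ne
  fn := F.fn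
  dep_only := F.dep_only

section InterveneAssign
variable [DecidableEq Var] [Fintype Var]

/-- One step of recomputation after the intervention `do(X = x)`. -/
noncomputable def stepFn (F : FuncSystem Var Val) (X : Finset Var) (x : Assign Var Val)
    (s : Assign Var Val) : Assign Var Val :=
  fun V => if V ∈ X then x V else if V ∈ F.En then F.fn V s else s V

/-- The result of the intervention `do(X = x)` on the assignment `s`
(for recursive systems, iterating the recomputation step sufficiently many times
reaches the fixed point). -/
noncomputable def interveneAssign (F : FuncSystem Var Val) (X : Finset Var) (x : Assign Var Val)
    (s : Assign Var Val) : Assign Var Val :=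
  (stepFn F X x)^[Fintype.card Var + 1] s

end InterveneAssign

/-- Formulas: equality atoms `V = v`, dependence atoms `=(Xs; Y)`, negation, conjunction,
tensor disjunction, global disjunction, and interventionist counterfactuals
`X = x □→ φ` (the antecedent is a finite set of variables together with the values
imposed on them, read off from an assignment; such antecedents are always consistent). -/
inductive Formula (Var : Type) (Val : Var → Type) : Type where
  | eq : (V : Var) → Val V → Formula Var Val
  | dep : List Var → Var → Formula Var Val
  | neg : Formula Var Val → Formula Var Val
  | and : Formula Var Val → Formula Var Val → Formula Var Val
  | or : Formula Var Val → Formula Var Val → Formula Var Val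
  | gor : Formula Var Val → Formula Var Val → Formula Var Val
  | cf : Finset Var → Assign Var Val → Formula Var Val → Formula Var Val

/-- CO-formulas: no dependence atoms, no global disjunction. -/
def IsCO : Formula Var Val → Prop
  | .eq _ _ => True
  | .dep _ _ => False
  | .neg φ => IsCO φ
  | .and φ ψ => IsCO φ ∧ IsCO ψ
  | .or φ ψ => IsCO φ ∧ IsCO ψ
  | .gor _ _ => False
  | .cf _ _ φ => IsCO φ

/-- COD-formulas: CO plus dependence atoms; negation applies only to CO-formulas. -/
def IsCOD : Formula Var Val → Prop
  | .eq _ _ => True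
  | .dep _ _ => True
  | .neg φ => IsCO φ
  | .and φ ψ => IsCOD φ ∧ IsCOD ψ
  | .or φ ψ => IsCOD φ ∧ IsCOD ψ
  | .gor _ _ => False
  | .cf _ _ φ => IsCOD φ

/-- CO_⤘-formulas: CO plus global disjunction; negation applies only to CO-formulas. -/
def IsCOglobal : Formula Var Val → Prop
  | .eq _ _ => True
  | .dep _ _ => False
  | .neg φ => IsCO φ
  | .and φ ψ => IsCOglobal φ ∧ IsCOglobal ψ
  | .or φ ψ => IsCOglobal φ ∧ IsCOglobal ψ
  | .gor φ ψ => IsCOglobal φ ∧ IsCOglobal ψ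
  | .cf _ _ φ => IsCOglobal φ

/-- Counterfactual-free formulas: no occurrence of `□→`. -/
def CFFree : Formula Var Val → Prop
  | .eq _ _ => True
  | .dep _ _ => True
  | .neg φ => CFFree φ
  | .and φ ψ => CFFree φ ∧ CFFree ψ
  | .or φ ψ => CFFree φ ∧ CFFree ψ
  | .gor φ ψ => CFFree φ ∧ CFFree ψ
  | .cf _ _ _ => False

section Semantics
variable [DecidableEq Var] [Fintype Var]

/-- Causal team semantics: satisfaction of a formula by a team of assignments together
with a system of functions. -/
noncomputable def csat : FuncSystem Var Val → Set (Assign Var Val) → Formula Var Val → Prop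
  | _, T, .eq V v => ∀ s ∈ T, s V = v
  | _, T, .dep Xs Y => ∀ s ∈ T, ∀ t ∈ T, (∀ W ∈ Xs, s W = t W) → s Y = t Y
  | F, T, .neg φ => ∀ s ∈ T, ¬ csat F {s} φ
  | F, T, .and φ ψ => csat F T φ ∧ csat F T ψ
  | F, T, .or φ ψ => ∃ T₁ T₂, T₁ ∪ T₂ = T ∧ csat F T₁ φ ∧ csat F T₂ ψ
  | F, T, .gor φ ψ => csat F T φ ∨ csat F T ψ
  | F, T, .cf X x φ => csat (restrictSys F X) (interveneAssign F X x '' T) φ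

end Semantics

/-- Generalized causal teams: sets of pairs of an assignment and a system of functions. -/
abbrev GCT (Var : Type) (Val : Var → Type) : Type :=
  Set (Assign Var Val × FuncSystem Var Val)

/-- The team component of a generalized causal team. -/
def teamOf (T : GCT Var Val) : Set (Assign Var Val) := Prod.fst '' T

/-- A genuine (recursive) generalized causal team: all pairs are compatible and all
function components are recursive. -/
def IsGCT (T : GCT Var Val) : Prop := ∀ p ∈ T, Compat p.1 p.2 ∧ RecursiveSys p.2

section GSemantics
variable [DecidableEq Var] [Fintype Var]

/-- Pointwise intervention on a generalized causal team. -/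
noncomputable def gIntervene (T : GCT Var Val) (X : Finset Var) (x : Assign Var Val) : GCT Var Val :=
  (fun p => (interveneAssign p.2 X x p.1, restrictSys p.2 X)) '' T

/-- Generalized causal team semantics. -/
noncomputable def gsat : GCT Var Val → Formula Var Val → Prop
  | T, .eq V v => ∀ p ∈ T, p.1 V = v
  | T, .dep Xs Y => ∀ p ∈ T, ∀ q ∈ T, (∀ W ∈ Xs, p.1 W = q.1 W) → p.1 Y = q.1 Y
  | T, .neg φ => ∀ p ∈ T, ¬ gsat {p} φ
  | T, .and φ ψ => gsat T φ ∧ gsat T ψ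
  | T, .or φ ψ => ∃ T₁ T₂, T₁ ∪ T₂ = T ∧ gsat T₁ φ ∧ gsat T₂ ψ
  | T, .gor φ ψ => gsat T φ ∨ gsat T ψ
  | T, .cf X x φ => gsat (gIntervene T X x) φ

end GSemantics

/-- Equivalence of generalized causal teams: for each system of functions `F`, the
assignments occurring together with a function component `∼`-similar to `F` are the same. -/
def gctEquiv (S T : GCT Var Val) : Prop :=
  ∀ F : FuncSystem Var Val,
    {s | ∃ G, (s, G) ∈ S ∧ sysEquiv G F} = {s | ∃ G, (s, G) ∈ T ∧ sysEquiv G F}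

/-- `S ≼ T` iff `S ≈ R ⊆ T` for some `R`. -/
def sle (S T : GCT Var Val) : Prop := ∃ R : GCT Var Val, gctEquiv S R ∧ R ⊆ T

/-- The generalized causal team generated by a causal team. -/
def toGCT (team : Set (Assign Var Val)) (F : FuncSystem Var Val) : GCT Var Val :=
  (fun s => (s, F)) '' team

/-- Equivalence of elements of generalized causal teams: same assignment and
`∼`-similar function components. -/
def pairEquiv (p q : Assign Var Val × FuncSystem Var Val) : Prop :=
  p.1 = q.1 ∧ sysEquiv p.2 q.2

/-- The quotient `T/≈` has at most `k` elements: `T` is covered by `k` representatives. -/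
def quotCardLE (T : GCT Var Val) (k : ℕ) : Prop :=
  ∃ R : Finset (Assign Var Val × FuncSystem Var Val),
    R.card ≤ k ∧ ∀ p ∈ T, ∃ q ∈ R, pairEquiv p q

section Entailment
variable [DecidableEq Var] [Fintype Var]

/-- Entailment over (recursive) generalized causal teams. -/
def gEntails (Δ : Set (Formula Var Val)) (α : Formula Var Val) : Prop :=
  ∀ T : GCT Var Val, IsGCT T → (∀ γ ∈ Δ, gsat T γ) → gsat T α

/-- Entailment over (recursive) causal teams. -/
def cEntails (Δ : Set (Formula Var Val)) (α : Formula Var Val) : Prop :=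
  ∀ (F : FuncSystem Var Val) (team : Set (Assign Var Val)),
    RecursiveSys F → (∀ s ∈ team, Compat s F) →
    (∀ γ ∈ Δ, csat F team γ) → csat F team α

/-- Causal incompatibility of two formulas. -/
def Incompatible (φ ψ : Formula Var Val) : Prop :=
  ∀ (F G : FuncSystem Var Val) (S T : Set (Assign Var Val)),
    S.Nonempty → T.Nonempty → RecursiveSys F → RecursiveSys G →
    (∀ s ∈ S, Compat s F) → (∀ t ∈ T, Compat t G) →
    csat F S φ → csat G T ψ → ¬ sysEquiv F G

end Entailment

section FormulaHelpers
variable [DecidableEq Var] [Fintype Var] [Nonempty Var]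
  [∀ V, Fintype (Val V)] [∀ V, Nonempty (Val V)]

/-- The falsum formula `⊥ := V = v ∧ V ≠ v`. -/
noncomputable def falsum : Formula Var Val :=
  let V := Classical.arbitrary Var
  Formula.and (Formula.eq V (Classical.arbitrary (Val V)))
    (Formula.neg (Formula.eq V (Classical.arbitrary (Val V))))

/-- Finite conjunction (the empty conjunction is `¬⊥`). -/
noncomputable def bigAnd : List (Formula Var Val) → Formula Var Val
  | [] => Formula.neg falsum
  | [φ] => φ
  | φ :: l => Formula.and φ (bigAnd l)

/-- Finite tensor disjunction (the empty disjunction is `⊥`). -/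
noncomputable def bigOr : List (Formula Var Val) → Formula Var Val
  | [] => falsum
  | [φ] => φ
  | φ :: l => Formula.or φ (bigOr l)

/-- Finite global disjunction (the empty disjunction is `⊥`). -/
noncomputable def bigGor : List (Formula Var Val) → Formula Var Val
  | [] => falsum
  | [φ] => φ
  | φ :: l => Formula.gor φ (bigGor l)

/-- The conjunction `⋀_{V ∈ Dom} V = s(V)` describing the assignment `s`. -/
noncomputable def eqConj (s : Assign Var Val) : Formula Var Val :=
  bigAnd ((Finset.univ : Finset Var).toList.map fun V => Formula.eq V (s V))

/-- `Θ^A := ⋁_{s ∈ A} ⋀_{V ∈ Dom} V = s(V)`. -/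
noncomputable def Theta (A : Finset (Assign Var Val)) : Formula Var Val :=
  bigOr (A.toList.map eqConj)

/-- The constancy atom `=(V)`. -/
def conAtom (V : Var) : Formula Var Val := Formula.dep [] V

/-- `μ := ⋀_{V ∈ Dom} ⋀_{w} (W_V = w □→ =(V))` where `W_V = Dom \ {V}`. -/
noncomputable def muForm : Formula Var Val :=
  bigAnd ((Finset.univ : Finset Var).toList.map fun V =>
    bigAnd (((Finset.univ : Finset (Assign Var Val))).toList.map fun w =>
      Formula.cf ((Finset.univ : Finset Var).erase V) w (conAtom V)))

/-- `χ := μ ∧ ⋀_{V ∈ Dom} =(V)`. -/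
noncomputable def chiForm : Formula Var Val :=
  Formula.and muForm (bigAnd ((Finset.univ : Finset Var).toList.map conAtom))

/-- `χ_k`: the `k`-fold tensor disjunction of `χ` (with `χ_0 := ⊥`). -/
noncomputable def chiK : ℕ → Formula Var Val
  | 0 => falsum
  | 1 => chiForm
  | n + 2 => Formula.or chiForm (chiK (n + 1))

end FormulaHelpers

section AuxInv
variable {Var : Type} {Val : Var → Type}

theorem fnEquiv_refl (F : FuncSystem Var Val) (V : Var) : fnEquiv F F V :=
  fun s t h => F.dep_only V s t (fun W hW => h W hW hW)

theorem fnEquiv_symm {F G : FuncSystem Var Val} {V : Var} (h : fnEquiv F G V) :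
    fnEquiv G F V :=
  fun s t hst => (h t s (fun W h1 h2 => (hst W h2 h1).symm)).symm

theorem fnEquiv_trans {F G H : FuncSystem Var Val} {V : Var} (h1 : fnEquiv F G V)
    (h2 : fnEquiv G H V) : fnEquiv F H V := by
  classical
  intro s t hst
  set r : Assign Var Val := fun W => if W ∈ F.PA V then s W else t W with hr
  have h3 : F.fn V s = F.fn V r := F.dep_only V s r (fun W hW => by simp [hr, hW])
  have h4 : F.fn V r = G.fn V r := h1 r r (fun _ _ _ => rfl)
  have h5 : G.fn V r = H.fn V t := by
    apply h2
    intro W hWG hWH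
    by_cases hWF : W ∈ F.PA V
    · simp only [hr, if_pos hWF]; exact hst W hWF hWH
    · simp [hr, hWF]
  exact h3.trans (h4.trans h5)

theorem sysEquiv_refl (F : FuncSystem Var Val) : sysEquiv F F :=
  ⟨rfl, fun V _ => fnEquiv_refl F V⟩

theorem sysEquiv_symm {F G : FuncSystem Var Val} (h : sysEquiv F G) : sysEquiv G F :=
  ⟨h.1.symm, fun V hV => fnEquiv_symm (h.2 V (h.1.symm ▸ hV))⟩

theorem sysEquiv_trans {F G H : FuncSystem Var Val} (h1 : sysEquiv F G)
    (h2 : sysEquiv G H) : sysEquiv F H :=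
  ⟨h1.1.trans h2.1, fun V hV => fnEquiv_trans (h1.2 V hV) (h2.2 V (h1.1 ▸ hV))⟩

theorem Cn_restrict (F : FuncSystem Var Val) (X : Finset Var) :
    Cn (restrictSys F X) = Cn F \ ↑X := by
  ext V
  simp only [Cn, restrictSys, Set.mem_setOf_eq, Set.mem_diff]
  tauto

theorem sysEquiv_restrict {F G : FuncSystem Var Val} (h : sysEquiv F G) (X : Finset Var) :
    sysEquiv (restrictSys F X) (restrictSys G X) := by
  have key : ∀ H : FuncSystem Var Val,
      (restrictSys H X).En \ Cn (restrictSys H X) = (H.En \ Cn H) \ ↑X := by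
    intro H
    rw [Cn_restrict]
    show (H.En \ ↑X) \ (Cn H \ ↑X) = _
    ext V
    simp only [Set.mem_diff]
    tauto
  constructor
  · rw [key F, key G, h.1]
  · intro V hV
    rw [key F] at hV
    exact h.2 V hV.1

theorem restrict_recursive {F : FuncSystem Var Val} (hrec : RecursiveSys F) (X : Finset Var) :
    RecursiveSys (restrictSys F X) := by
  intro V hV
  exact hrec V (Relation.TransGen.mono (r := Edge (restrictSys F X)) (p := Edge F) (fun a b hab => ⟨hab.1.1, hab.2⟩) V V hV)

section AuxSem
variable [DecidableEq Var] [Fintype Var]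

theorem iter_exo (F : FuncSystem Var Val) (X : Finset Var) (x s : Assign Var Val)
    {V : Var} (hX : V ∉ X) (hEn : V ∉ F.En) : ∀ k, (stepFn F X x)^[k] s V = s V := by
  intro k
  induction k with
  | zero => rfl
  | succ n ih =>
    rw [Function.iterate_succ_apply']
    show (if V ∈ X then x V else if V ∈ F.En then F.fn V _ else _) = s V
    rw [if_neg hX, if_neg hEn]
    exact ih

theorem iter_X (F : FuncSystem Var Val) (X : Finset Var) (x s : Assign Var Val)
    {V : Var} (hX : V ∈ X) (k : ℕ) : (stepFn F X x)^[k + 1] s V = x V := by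
  rw [Function.iterate_succ_apply']
  show (if V ∈ X then x V else _) = x V
  rw [if_pos hX]

/-- Rank of a variable: number of its strict ancestors in the causal graph. -/
noncomputable def dRank (F : FuncSystem Var Val) (V : Var) : ℕ :=
  Set.ncard {W | Relation.TransGen (Edge F) W V}

theorem dRank_lt {F : FuncSystem Var Val} (hrec : RecursiveSys F) {W V : Var}
    (h : Edge F W V) : dRank F W < dRank F V := by
  have hsub : {U | Relation.TransGen (Edge F) U W} ⊆ {U | Relation.TransGen (Edge F) U V} :=
    fun U hU => hU.trans (Relation.TransGen.single h)
  have hmem : W ∈ {U | Relation.TransGen (Edge F) U V} := Relation.TransGen.single h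
  have hnot : W ∉ {U | Relation.TransGen (Edge F) U W} := hrec W
  apply Set.ncard_lt_ncard _ (Set.toFinite _)
  exact ⟨hsub, fun hc => hnot (hc hmem)⟩

theorem dRank_le_card (F : FuncSystem Var Val) (V : Var) :
    dRank F V ≤ Fintype.card Var := by
  have := Set.ncard_le_ncard (Set.subset_univ {W | Relation.TransGen (Edge F) W V})
    (Set.toFinite _)
  rwa [Set.ncard_univ, Nat.card_eq_fintype_card] at this

theorem stab {F : FuncSystem Var Val} (hrec : RecursiveSys F) (X : Finset Var)
    (x s : Assign Var Val) :
    ∀ j, 1 ≤ j → ∀ V, dRank F V < j →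
      (stepFn F X x)^[j + 1] s V = (stepFn F X x)^[j] s V := by
  intro j
  induction j using Nat.strong_induction_on with
  | _ j ih =>
    intro hj V hV
    obtain ⟨m, rfl⟩ : ∃ m, j = m + 1 := ⟨j - 1, by omega⟩
    · 
      by_cases hX : V ∈ X
      · rw [iter_X F X x s hX, iter_X F X x s hX]
      · by_cases hEn : V ∈ F.En
        · rw [Function.iterate_succ_apply' _ (m + 1), Function.iterate_succ_apply' _ m]
          show (if V ∈ X then x V else if V ∈ F.En then F.fn V _ else _) =
            (if V ∈ X then x V else if V ∈ F.En then F.fn V _ else _)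
          rw [if_neg hX, if_neg hX, if_pos hEn, if_pos hEn]
          apply F.dep_only
          intro W hW
          have hdW : dRank F W < dRank F V := dRank_lt hrec ⟨hEn, hW⟩
          rcases m with _ | n
          · omega
          · have h5 := ih (n + 1) (by omega) (by omega) W (by omega)
            rwa [Function.iterate_succ_apply' _ (n + 1)] at h5
        · rw [iter_exo F X x s hX hEn, iter_exo F X x s hX hEn]

theorem stepFn_fix {F : FuncSystem Var Val} (hrec : RecursiveSys F) (X : Finset Var)
    (x s : Assign Var Val) :
    stepFn F X x (interveneAssign F X x s) = interveneAssign F X x s := by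
  funext V
  have h1 : dRank F V < Fintype.card Var + 1 := Nat.lt_succ_of_le (dRank_le_card F V)
  have h2 := stab hrec X x s (Fintype.card Var + 1) (by omega) V h1
  show stepFn F X x ((stepFn F X x)^[Fintype.card Var + 1] s) V = _
  have h3 : (stepFn F X x)^[Fintype.card Var + 1 + 1] s =
      stepFn F X x ((stepFn F X x)^[Fintype.card Var + 1] s) :=
    Function.iterate_succ_apply' _ _ _
  rw [← h3]
  exact h2

theorem compat_intervene {F : FuncSystem Var Val} (hrec : RecursiveSys F) (X : Finset Var)
    (x s : Assign Var Val) :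
    Compat (interveneAssign F X x s) (restrictSys F X) := by
  intro V hV
  have hfix := congrFun (stepFn_fix hrec X x s) V
  show interveneAssign F X x s V = F.fn V (interveneAssign F X x s)
  have hX : V ∉ X := by
    intro hc
    exact hV.2 hc
  rw [show stepFn F X x (interveneAssign F X x s) V =
      (if V ∈ X then x V else if V ∈ F.En then F.fn V (interveneAssign F X x s) else
        interveneAssign F X x s V) from rfl] at hfix
  rw [if_neg hX, if_pos hV.1] at hfix
  exact hfix.symm

theorem stepIter_congr {F G : FuncSystem Var Val} (h : sysEquiv F G) {s : Assign Var Val}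
    (hsF : Compat s F) (hsG : Compat s G) (X : Finset Var) (x : Assign Var Val) :
    ∀ k, (stepFn F X x)^[k] s = (stepFn G X x)^[k] s := by
  intro k
  induction k with
  | zero => rfl
  | succ n ih =>
    rw [Function.iterate_succ_apply', Function.iterate_succ_apply', ih]
    funext V
    set u := (stepFn G X x)^[n] s with hu
    have huF : (stepFn F X x)^[n] s = u := ih
    show (if V ∈ X then x V else if V ∈ F.En then F.fn V u else u V) =
      (if V ∈ X then x V else if V ∈ G.En then G.fn V u else u V)
    by_cases hX : V ∈ X
    · rw [if_pos hX, if_pos hX]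
    · rw [if_neg hX, if_neg hX]
      have hcF : V ∈ Cn F → F.fn V u = s V :=
        fun hC => (hC.2 u s).trans (hsF V hC.1).symm
      have hcG : V ∈ Cn G → G.fn V u = s V :=
        fun hC => (hC.2 u s).trans (hsG V hC.1).symm
      have hexoG : V ∉ G.En → u V = s V := fun hE => iter_exo G X x s hX hE n
      have hexoF : V ∉ F.En → u V = s V := fun hE => by
        rw [← huF]; exact iter_exo F X x s hX hE n
      by_cases hEnF : V ∈ F.En
      · rw [if_pos hEnF]
        by_cases hnc : V ∈ F.En \ Cn F
        · have hG' : V ∈ G.En \ Cn G := h.1 ▸ hnc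
          rw [if_pos hG'.1]
          exact h.2 V hnc u u (fun _ _ _ => rfl)
        · have hCnF : V ∈ Cn F := by
            by_contra hc
            exact hnc ⟨hEnF, hc⟩
          by_cases hEnG : V ∈ G.En
          · rw [if_pos hEnG]
            by_cases hCnG : V ∈ Cn G
            · rw [hcF hCnF, hcG hCnG]
            · exact absurd (h.1.symm ▸ (⟨hEnG, hCnG⟩ : V ∈ G.En \ Cn G)) hnc
          · rw [if_neg hEnG, hcF hCnF, hexoG hEnG]
      · rw [if_neg hEnF]
        by_cases hEnG : V ∈ G.En
        · rw [if_pos hEnG]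
          have hCnG : V ∈ Cn G := by
            by_contra hc
            have : V ∈ F.En \ Cn F := h.1.symm ▸ (⟨hEnG, hc⟩ : V ∈ G.En \ Cn G)
            exact hEnF this.1
          rw [hcG hCnG, hexoF hEnF]
        · rw [if_neg hEnG]

theorem interveneAssign_congr {F G : FuncSystem Var Val} (h : sysEquiv F G)
    {s : Assign Var Val} (hsF : Compat s F) (hsG : Compat s G) (X : Finset Var)
    (x : Assign Var Val) : interveneAssign F X x s = interveneAssign G X x s :=
  stepIter_congr h hsF hsG X x _

theorem IsGCT_gIntervene {T : GCT Var Val} (hT : IsGCT T) (X : Finset Var)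
    (x : Assign Var Val) : IsGCT (gIntervene T X x) := by
  rintro p ⟨q, hq, rfl⟩
  obtain ⟨hc, hr⟩ := hT q hq
  exact ⟨compat_intervene hr X x q.1, restrict_recursive hr X⟩

end AuxSem

theorem gctEquiv_symm {T S : GCT Var Val} (h : gctEquiv T S) : gctEquiv S T :=
  fun F => (h F).symm

theorem gctEquiv_mem {T S : GCT Var Val} (h : gctEquiv T S) {s : Assign Var Val}
    {G : FuncSystem Var Val} (hm : (s, G) ∈ T) :
    ∃ G', (s, G') ∈ S ∧ sysEquiv G' G := by
  have h2 : s ∈ {u | ∃ H, (u, H) ∈ T ∧ sysEquiv H G} := ⟨G, hm, sysEquiv_refl G⟩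
  rw [h G] at h2
  exact h2

section AuxSem2
variable [DecidableEq Var] [Fintype Var]

theorem gIntervene_subset_aux {T S : GCT Var Val} (hT : IsGCT T) (hS : IsGCT S)
    (h : gctEquiv T S) (X : Finset Var) (x : Assign Var Val) (F : FuncSystem Var Val) :
    {u | ∃ G, (u, G) ∈ gIntervene T X x ∧ sysEquiv G F} ⊆
      {u | ∃ G, (u, G) ∈ gIntervene S X x ∧ sysEquiv G F} := by
  rintro u ⟨G, ⟨p, hp, hpe⟩, hGF⟩
  have hu : interveneAssign p.2 X x p.1 = u := congrArg Prod.fst hpe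
  have hG : restrictSys p.2 X = G := congrArg Prod.snd hpe
  obtain ⟨G', hG'S, hG'p⟩ := gctEquiv_mem h hp
  have hIeq : interveneAssign G' X x p.1 = interveneAssign p.2 X x p.1 :=
    interveneAssign_congr hG'p (hS _ hG'S).1 (hT p hp).1 X x
  refine ⟨restrictSys G' X, ⟨(p.1, G'), hG'S, ?_⟩, ?_⟩
  · show (interveneAssign G' X x p.1, restrictSys G' X) = _
    rw [hIeq, hu]
  · exact sysEquiv_trans (sysEquiv_restrict hG'p X) (hG ▸ hGF)

theorem gctEquiv_gIntervene {T S : GCT Var Val} (hT : IsGCT T) (hS : IsGCT S)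
    (h : gctEquiv T S) (X : Finset Var) (x : Assign Var Val) :
    gctEquiv (gIntervene T X x) (gIntervene S X x) := fun F =>
  Set.Subset.antisymm (gIntervene_subset_aux hT hS h X x F)
    (gIntervene_subset_aux hS hT (gctEquiv_symm h) X x F)

end AuxSem2

theorem isCO_isCOD : ∀ φ : Formula Var Val, IsCO φ → IsCOD φ
  | .eq _ _, _ => trivial
  | .dep _ _, h => h.elim
  | .neg _, h => h
  | .and φ ψ, h => ⟨isCO_isCOD φ h.1, isCO_isCOD ψ h.2⟩
  | .or φ ψ, h => ⟨isCO_isCOD φ h.1, isCO_isCOD ψ h.2⟩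
  | .gor _ _, h => h.elim
  | .cf _ _ φ, h => isCO_isCOD φ h

end AuxInv

section MainInv
variable {Var : Type} {Val : Var → Type} [DecidableEq Var] [Fintype Var]

theorem gctEquiv_singleton {q : Assign Var Val × FuncSystem Var Val}
    {G : FuncSystem Var Val} (hGq : sysEquiv G q.2) :
    gctEquiv {(q.1, G)} {q} := by
  intro F
  ext u
  simp only [Set.mem_setOf_eq, Set.mem_singleton_iff]
  constructor
  · rintro ⟨H, hH, hHF⟩
    have h1 : u = q.1 := congrArg Prod.fst hH
    have h2 : H = G := congrArg Prod.snd hH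
    subst h1
    exact ⟨q.2, rfl, sysEquiv_trans (sysEquiv_symm hGq) (h2 ▸ hHF)⟩
  · rintro ⟨H, hH, hHF⟩
    have h1 : u = q.1 := congrArg Prod.fst hH
    have h2 : H = q.2 := congrArg Prod.snd hH
    subst h1
    exact ⟨G, rfl, sysEquiv_trans hGq (h2 ▸ hHF)⟩

theorem main_inv : ∀ φ : Formula Var Val, (IsCOD φ ∨ IsCOglobal φ) →
    ∀ T S : GCT Var Val, IsGCT T → IsGCT S → gctEquiv T S → (gsat T φ ↔ gsat S φ) := by
  intro φ
  induction φ with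
  | eq V v =>
    intro _ T S _ _ heq
    have key : ∀ T S : GCT Var Val, gctEquiv T S →
        gsat T (Formula.eq V v) → gsat S (Formula.eq V v) := by
      intro T S heq h p hp
      obtain ⟨G, hG, _⟩ := gctEquiv_mem (gctEquiv_symm heq) hp
      exact h (p.1, G) hG
    exact ⟨key T S heq, key S T (gctEquiv_symm heq)⟩
  | dep Xs Y =>
    intro _ T S _ _ heq
    have key : ∀ T S : GCT Var Val, gctEquiv T S →
        gsat T (Formula.dep Xs Y) → gsat S (Formula.dep Xs Y) := by
      intro T S heq h p hp q hq hagree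
      obtain ⟨G, hG, _⟩ := gctEquiv_mem (gctEquiv_symm heq) hp
      obtain ⟨G', hG', _⟩ := gctEquiv_mem (gctEquiv_symm heq) hq
      exact h (p.1, G) hG (q.1, G') hG' hagree
    exact ⟨key T S heq, key S T (gctEquiv_symm heq)⟩
  | neg ψ ihψ =>
    intro hφ T S hT hS heq
    have hCO : IsCO ψ := by rcases hφ with h | h <;> exact h
    have hψ : IsCOD ψ ∨ IsCOglobal ψ := Or.inl (isCO_isCOD ψ hCO)
    have key : ∀ T S : GCT Var Val, IsGCT T → IsGCT S → gctEquiv T S →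
        gsat T (Formula.neg ψ) → gsat S (Formula.neg ψ) := by
      intro T S hT hS heq h q hq
      obtain ⟨G, hG, hGq⟩ := gctEquiv_mem (gctEquiv_symm heq) hq
      have h1 : ¬ gsat {(q.1, G)} ψ := h (q.1, G) hG
      intro hc
      apply h1
      refine (ihψ hψ {(q.1, G)} {q} ?_ ?_ (gctEquiv_singleton hGq)).mpr hc
      · intro p hp
        rw [Set.mem_singleton_iff] at hp
        subst hp
        exact hT _ hG
      · intro p hp
        rw [Set.mem_singleton_iff] at hp
        subst hp
        exact hS _ hq
    exact ⟨key T S hT hS heq, key S T hS hT (gctEquiv_symm heq)⟩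
  | and ψ χ ihψ ihχ =>
    intro hφ T S hT hS heq
    obtain ⟨hψ, hχ⟩ : (IsCOD ψ ∨ IsCOglobal ψ) ∧ (IsCOD χ ∨ IsCOglobal χ) := by
      rcases hφ with ⟨a, b⟩ | ⟨a, b⟩
      exacts [⟨Or.inl a, Or.inl b⟩, ⟨Or.inr a, Or.inr b⟩]
    exact and_congr (ihψ hψ T S hT hS heq) (ihχ hχ T S hT hS heq)
  | gor ψ χ ihψ ihχ =>
    intro hφ T S hT hS heq
    obtain ⟨hψ, hχ⟩ : (IsCOD ψ ∨ IsCOglobal ψ) ∧ (IsCOD χ ∨ IsCOglobal χ) := by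
      rcases hφ with h | ⟨a, b⟩
      exacts [h.elim, ⟨Or.inr a, Or.inr b⟩]
    exact or_congr (ihψ hψ T S hT hS heq) (ihχ hχ T S hT hS heq)
  | or ψ χ ihψ ihχ =>
    intro hφ T S hT hS heq
    obtain ⟨hψ, hχ⟩ : (IsCOD ψ ∨ IsCOglobal ψ) ∧ (IsCOD χ ∨ IsCOglobal χ) := by
      rcases hφ with ⟨a, b⟩ | ⟨a, b⟩
      exacts [⟨Or.inl a, Or.inl b⟩, ⟨Or.inr a, Or.inr b⟩]
    have key : ∀ T S : GCT Var Val, IsGCT T → IsGCT S → gctEquiv T S →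
        gsat T (Formula.or ψ χ) → gsat S (Formula.or ψ χ) := by
      intro T S hT hS heq h
      obtain ⟨T₁, T₂, hU, h1, h2⟩ := h
      have equivPart : ∀ T' : GCT Var Val, T' ⊆ T →
          gctEquiv T' {q ∈ S | ∃ p ∈ T', q.1 = p.1 ∧ sysEquiv q.2 p.2} := by
        intro T' hsub F
        ext u
        simp only [Set.mem_setOf_eq, Set.mem_sep_iff]
        constructor
        · rintro ⟨G, hGT, hGF⟩
          obtain ⟨G', hG'S, hG'G⟩ := gctEquiv_mem heq (hsub hGT)
          exact ⟨G', ⟨hG'S, (u, G), hGT, rfl, hG'G⟩, sysEquiv_trans hG'G hGF⟩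
        · rintro ⟨G', ⟨hG'S, p, hpT', hup, hG'p⟩, hG'F⟩
          refine ⟨p.2, ?_, sysEquiv_trans (sysEquiv_symm hG'p) hG'F⟩
          rw [hup]
          exact hpT'
      have hsub1 : T₁ ⊆ T := hU ▸ Set.subset_union_left
      have hsub2 : T₂ ⊆ T := hU ▸ Set.subset_union_right
      refine ⟨{q ∈ S | ∃ p ∈ T₁, q.1 = p.1 ∧ sysEquiv q.2 p.2},
              {q ∈ S | ∃ p ∈ T₂, q.1 = p.1 ∧ sysEquiv q.2 p.2}, ?_, ?_, ?_⟩
      · apply Set.Subset.antisymm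
        · rintro q (⟨hq, _⟩ | ⟨hq, _⟩) <;> exact hq
        · intro q hq
          obtain ⟨G, hGT, hGq⟩ := gctEquiv_mem (gctEquiv_symm heq) hq
          rw [← hU] at hGT
          rcases hGT with h' | h'
          · exact Or.inl ⟨hq, (q.1, G), h', rfl, sysEquiv_symm hGq⟩
          · exact Or.inr ⟨hq, (q.1, G), h', rfl, sysEquiv_symm hGq⟩
      · exact (ihψ hψ T₁ _ (fun p hp => hT p (hsub1 hp))
          (fun p hp => hS p hp.1) (equivPart T₁ hsub1)).mp h1
      · exact (ihχ hχ T₂ _ (fun p hp => hT p (hsub2 hp))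
          (fun p hp => hS p hp.1) (equivPart T₂ hsub2)).mp h2
    exact ⟨key T S hT hS heq, key S T hS hT (gctEquiv_symm heq)⟩
  | cf X x ψ ihψ =>
    intro hφ T S hT hS heq
    have hψ : IsCOD ψ ∨ IsCOglobal ψ := by
      rcases hφ with h | h
      exacts [Or.inl h, Or.inr h]
    exact ihψ hψ _ _ (IsGCT_gIntervene hT X x) (IsGCT_gIntervene hS X x)
      (gctEquiv_gIntervene hT hS heq X x)

end MainInv

/-- invariance under causal equivalence: equivalent generalized causal
teams (T ≈ S) satisfy the same formulas of CO, CO with global disjunction, and COD. -/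
theorem invariance_under_equivalence {Var : Type} [Fintype Var] [DecidableEq Var] [Nonempty Var]
    {Val : Var → Type} [∀ V, Fintype (Val V)] [∀ V, Nonempty (Val V)]
    (T S : GCT Var Val) (hT : IsGCT T) (hS : IsGCT S) (heq : gctEquiv T S)
    (φ : Formula Var Val) (hφ : IsCOD φ ∨ IsCOglobal φ) :
    gsat T φ ↔ gsat S φ :=
  main_inv φ hφ T S hT hS heq

end CausalTeams
end

section
/- Disjunction property for global disjunction over generalized causal teams: if Δ is a set of CO-formulas and φ, ψ are arbitrary formulas, and Δ ⊨^g φ ⤘ ψ, then Δ ⊨^g φ or Δ ⊨^g ψ. -/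
namespace CausalTeams

attribute [local instance] Classical.propDecidable

variable {Var : Type} {Val : Var → Type}

section AuxLemmas
variable {Var : Type} [Fintype Var] [DecidableEq Var] {Val : Var → Type}

/-- Downward closure: gsat is monotone under subteams, for all formulas. -/
theorem gsat_mono (γ : Formula Var Val) :
    ∀ {S T : GCT Var Val}, S ⊆ T → gsat T γ → gsat S γ := by
  induction γ with
  | eq V v => intro S T h hT p hp; exact hT p (h hp)
  | dep Xs Y => intro S T h hT p hp q hq hpq; exact hT p (h hp) q (h hq) hpq
  | neg φ ih => intro S T h hT p hp; exact hT p (h hp)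
  | and φ ψ ihφ ihψ =>
    intro S T h hT; exact ⟨ihφ h hT.1, ihψ h hT.2⟩
  | or φ ψ ihφ ihψ =>
    intro S T h hT
    obtain ⟨T₁, T₂, hu, h1, h2⟩ := hT
    refine ⟨T₁ ∩ S, T₂ ∩ S, ?_, ihφ Set.inter_subset_left h1,
      ihψ Set.inter_subset_left h2⟩
    rw [← Set.union_inter_distrib_right, hu]
    exact Set.inter_eq_self_of_subset_right h
  | gor φ ψ ihφ ihψ =>
    intro S T h hT
    rcases hT with hT | hT
    · exact Or.inl (ihφ h hT)
    · exact Or.inr (ihψ h hT)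
  | cf X x φ ih =>
    intro S T h hT
    exact ih (Set.image_mono h) hT

/-- Flatness of CO-formulas over generalized causal teams. -/
theorem gsat_flat (γ : Formula Var Val) (hγ : IsCO γ) :
    ∀ T : GCT Var Val, gsat T γ ↔ ∀ p ∈ T, gsat {p} γ := by
  induction γ with
  | eq V v =>
    intro T
    constructor
    · intro h p hp q hq; rw [Set.mem_singleton_iff] at hq; exact hq ▸ h p hp
    · intro h p hp; exact h p hp p rfl
  | dep Xs Y => exact absurd hγ (by simp [IsCO])
  | neg φ ih =>
    intro T
    constructor
    · intro h p hp q hq; rw [Set.mem_singleton_iff] at hq; exact hq ▸ h p hp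
    · intro h p hp; exact h p hp p rfl
  | and φ ψ ihφ ihψ =>
    intro T
    obtain ⟨h1, h2⟩ := hγ
    constructor
    · intro h p hp
      exact ⟨(ihφ h1 {p}).mpr (fun q hq => by
          rw [Set.mem_singleton_iff] at hq; exact hq ▸ ((ihφ h1 T).mp h.1) p hp),
        (ihψ h2 {p}).mpr (fun q hq => by
          rw [Set.mem_singleton_iff] at hq; exact hq ▸ ((ihψ h2 T).mp h.2) p hp)⟩
    · intro h
      exact ⟨(ihφ h1 T).mpr (fun p hp => (h p hp).1),
        (ihψ h2 T).mpr (fun p hp => (h p hp).2)⟩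
  | or φ ψ ihφ ihψ =>
    intro T
    obtain ⟨h1, h2⟩ := hγ
    constructor
    · intro h p hp
      exact gsat_mono _ (Set.singleton_subset_iff.mpr hp) h
    · intro h
      refine ⟨{p ∈ T | gsat {p} φ}, {p ∈ T | ¬ gsat {p} φ}, ?_, ?_, ?_⟩
      · ext p
        constructor
        · rintro (hp | hp) <;> exact hp.1
        · intro hp
          by_cases hc : gsat {p} φ
          · exact Or.inl ⟨hp, hc⟩
          · exact Or.inr ⟨hp, hc⟩
      · exact (ihφ h1 _).mpr (fun p hp => hp.2)
      · refine (ihψ h2 _).mpr (fun p hp => ?_)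
        obtain ⟨S₁, S₂, hu, hs1, hs2⟩ := h p hp.1
        have hps : p ∈ S₁ ∪ S₂ := hu ▸ rfl
        rcases hps with hps | hps
        · exact absurd (gsat_mono φ (Set.singleton_subset_iff.mpr hps) hs1) hp.2
        · exact gsat_mono ψ (Set.singleton_subset_iff.mpr hps) hs2
  | gor φ ψ ihφ ihψ => exact absurd hγ (by simp [IsCO])
  | cf X x φ ih =>
    intro T
    have hflat := ih hγ
    show gsat (gIntervene T X x) φ ↔ _
    rw [hflat]
    constructor
    · intro h p hp
      show gsat (gIntervene {p} X x) φ
      rw [gIntervene, Set.image_singleton, hflat]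
      intro q hq
      rw [Set.mem_singleton_iff] at hq; subst hq
      exact h _ ⟨p, hp, rfl⟩
    · rintro h q ⟨p, hp, rfl⟩
      have := h p hp
      rw [show gsat {p} (Formula.cf X x φ) = gsat (gIntervene {p} X x) φ from rfl,
        gIntervene, Set.image_singleton, hflat] at this
      exact this _ rfl

end AuxLemmas

/-- disjunction property for global disjunction over generalized causal
teams: if a set of CO-formulas entails φ ⤘ ψ, then it entails φ or it entails ψ. -/
theorem disjunction_property {Var : Type} [Fintype Var] [DecidableEq Var] [Nonempty Var]
    {Val : Var → Type} [∀ V, Fintype (Val V)] [∀ V, Nonempty (Val V)]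
    (Δ : Set (Formula Var Val)) (hΔ : ∀ γ ∈ Δ, IsCO γ)
    (φ ψ : Formula Var Val)
    (hφ : IsCOD φ ∨ IsCOglobal φ) (hψ : IsCOD ψ ∨ IsCOglobal ψ) :
    gEntails Δ (Formula.gor φ ψ) → gEntails Δ φ ∨ gEntails Δ ψ := by
  intro h
  by_contra hcon
  push_neg at hcon
  obtain ⟨hφ', hψ'⟩ := hcon
  rw [gEntails] at hφ' hψ'
  push_neg at hφ' hψ'
  obtain ⟨T₁, hT₁, hΔ₁, hnφ⟩ := hφ'
  obtain ⟨T₂, hT₂, hΔ₂, hnψ⟩ := hψ'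
  have hTU : IsGCT (T₁ ∪ T₂) := by
    rintro p (hp | hp)
    · exact hT₁ p hp
    · exact hT₂ p hp
  have hΔU : ∀ γ ∈ Δ, gsat (T₁ ∪ T₂) γ := by
    intro γ hγ
    rw [gsat_flat γ (hΔ γ hγ)]
    rintro p (hp | hp)
    · exact (gsat_flat γ (hΔ γ hγ) T₁).mp (hΔ₁ γ hγ) p hp
    · exact (gsat_flat γ (hΔ γ hγ) T₂).mp (hΔ₂ γ hγ) p hp
  have := h (T₁ ∪ T₂) hTU hΔU
  rcases this with hsat | hsat
  · exact hnφ (gsat_mono φ Set.subset_union_left hsat)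
  · exact hnψ (gsat_mono ψ Set.subset_union_right hsat)

end CausalTeams
end
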